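/- For every real x with 0 < x ≤ π/2, one has 0 ≤ 1/x − x/3 − cot x ≤ x³/30. -/

import Mathlib

open Real

private lemma nonneg_of_deriv {f f' : ℝ → ℝ} (hf : ∀ t, HasDerivAt f (f' t) t)
    (h0 : f 0 = 0) (hd : ∀ t, 0 ≤ t → 0 ≤ f' t) {x : ℝ} (hx : 0 ≤ x) : 0 ≤ f x := by
  have hdiff : Differentiable ℝ f := fun t => (hf t).differentiableAt
  have hmono : MonotoneOn f (Set.Ici (0:ℝ)) := by
    apply monotoneOn_of_deriv_nonneg (convex_Ici 0) hdiff.continuous.continuousOn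
      (fun t _ => (hdiff t).differentiableWithinAt)
    intro t ht
    rw [(hf t).deriv]
    exact hd t (le_of_lt (by simpa using ht))
  have := hmono Set.self_mem_Ici (Set.mem_Ici.2 hx) hx
  linarith [h0 ▸ this]

private lemma sin_ge_cubic {x : ℝ} (hx : 0 ≤ x) : x - x ^ 3 / 6 ≤ sin x := by
  have := nonneg_of_deriv (f := fun t => sin t - (t - t ^ 3 / 6))
    (f' := fun t => cos t - (1 - t ^ 2 / 2)) (fun t => by
      have h1 : HasDerivAt (fun t : ℝ => t - t ^ 3 / 6) (1 - t ^ 2 / 2) t := by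
        have := (hasDerivAt_id t).sub ((hasDerivAt_pow 3 t).div_const 6)
        refine this.congr_deriv ?_
        norm_num
        ring
      exact (Real.hasDerivAt_sin t).sub h1) (by simp)
    (fun t ht => by nlinarith [Real.one_sub_sq_div_two_le_cos (x := t)]) hx
  linarith [this]

private lemma cos_le_quartic {x : ℝ} (hx : 0 ≤ x) : cos x ≤ 1 - x ^ 2 / 2 + x ^ 4 / 24 := by
  have := nonneg_of_deriv (f := fun t => (1 - t ^ 2 / 2 + t ^ 4 / 24) - cos t)
    (f' := fun t => sin t - (t - t ^ 3 / 6)) (fun t => by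
      have h1 : HasDerivAt (fun t : ℝ => 1 - t ^ 2 / 2 + t ^ 4 / 24)
          (-(t - t ^ 3 / 6)) t := by
        have := (((hasDerivAt_pow 2 t).div_const 2).const_sub 1).add
          ((hasDerivAt_pow 4 t).div_const 24)
        refine this.congr_deriv ?_
        norm_num
        ring
      have := h1.sub (Real.hasDerivAt_cos t)
      exact this.congr_deriv (by ring)) (by simp)
    (fun t ht => by linarith [sin_ge_cubic ht]) hx
  linarith [this]

private lemma sin_le_quintic {x : ℝ} (hx : 0 ≤ x) :
    sin x ≤ x - x ^ 3 / 6 + x ^ 5 / 120 := by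
  have := nonneg_of_deriv (f := fun t => (t - t ^ 3 / 6 + t ^ 5 / 120) - sin t)
    (f' := fun t => (1 - t ^ 2 / 2 + t ^ 4 / 24) - cos t) (fun t => by
      have h1 : HasDerivAt (fun t : ℝ => t - t ^ 3 / 6 + t ^ 5 / 120)
          (1 - t ^ 2 / 2 + t ^ 4 / 24) t := by
        have := ((hasDerivAt_id t).sub ((hasDerivAt_pow 3 t).div_const 6)).add
          ((hasDerivAt_pow 5 t).div_const 120)
        refine this.congr_deriv ?_
        norm_num
        ring
      exact h1.sub (Real.hasDerivAt_sin t)) (by simp)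
    (fun t ht => by linarith [cos_le_quartic ht]) hx
  linarith [this]

private lemma cos_ge_sextic {x : ℝ} (hx : 0 ≤ x) :
    1 - x ^ 2 / 2 + x ^ 4 / 24 - x ^ 6 / 720 ≤ cos x := by
  have := nonneg_of_deriv
    (f := fun t => cos t - (1 - t ^ 2 / 2 + t ^ 4 / 24 - t ^ 6 / 720))
    (f' := fun t => (t - t ^ 3 / 6 + t ^ 5 / 120) - sin t) (fun t => by
      have h1 : HasDerivAt (fun t : ℝ => 1 - t ^ 2 / 2 + t ^ 4 / 24 - t ^ 6 / 720)
          (-(t - t ^ 3 / 6 + t ^ 5 / 120)) t := by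
        have := ((((hasDerivAt_pow 2 t).div_const 2).const_sub 1).add
          ((hasDerivAt_pow 4 t).div_const 24)).sub ((hasDerivAt_pow 6 t).div_const 720)
        refine this.congr_deriv ?_
        norm_num
        ring
      have := (Real.hasDerivAt_cos t).sub h1
      exact this.congr_deriv (by ring)) (by simp)
    (fun t ht => by linarith [sin_le_quintic ht]) hx
  linarith [this]

private lemma sin_ge_septic {x : ℝ} (hx : 0 ≤ x) :
    x - x ^ 3 / 6 + x ^ 5 / 120 - x ^ 7 / 5040 ≤ sin x := by
  have := nonneg_of_deriv
    (f := fun t => sin t - (t - t ^ 3 / 6 + t ^ 5 / 120 - t ^ 7 / 5040))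
    (f' := fun t => cos t - (1 - t ^ 2 / 2 + t ^ 4 / 24 - t ^ 6 / 720)) (fun t => by
      have h1 : HasDerivAt (fun t : ℝ => t - t ^ 3 / 6 + t ^ 5 / 120 - t ^ 7 / 5040)
          (1 - t ^ 2 / 2 + t ^ 4 / 24 - t ^ 6 / 720) t := by
        have := (((hasDerivAt_id t).sub ((hasDerivAt_pow 3 t).div_const 6)).add
          ((hasDerivAt_pow 5 t).div_const 120)).sub ((hasDerivAt_pow 7 t).div_const 5040)
        refine this.congr_deriv ?_
        norm_num
        ring
      exact (Real.hasDerivAt_sin t).sub h1) (by simp)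
    (fun t ht => by linarith [cos_ge_sextic ht]) hx
  linarith [this]

/-- For every real `x` with `0 < x ≤ π/2`, `0 ≤ 1/x − x/3 − cot x ≤ x³/30`. -/
theorem cot_expansion_bounds (x : ℝ) (h0 : 0 < x) (hx : x ≤ π / 2) :
    0 ≤ 1 / x - x / 3 - Real.cot x ∧ 1 / x - x / 3 - Real.cot x ≤ x ^ 3 / 30 := by
  have hsin : 0 < sin x := Real.sin_pos_of_pos_of_lt_pi h0 (by linarith [Real.pi_pos])
  have hcot : Real.cot x = cos x / sin x := Real.cot_eq_cos_div_sin x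
  have hx0 : 0 ≤ x := h0.le
  have hpi : x ≤ 1.5707965 := by
    have := Real.pi_lt_d6
    linarith
  have hs1 : x - x ^ 3 / 6 ≤ sin x := sin_ge_cubic hx0
  have hs2 : sin x ≤ x - x ^ 3 / 6 + x ^ 5 / 120 := sin_le_quintic hx0
  have hs3 : x - x ^ 3 / 6 + x ^ 5 / 120 - x ^ 7 / 5040 ≤ sin x := sin_ge_septic hx0
  have hc1 : cos x ≤ 1 - x ^ 2 / 2 + x ^ 4 / 24 := cos_le_quartic hx0
  have hc2 : 1 - x ^ 2 / 2 + x ^ 4 / 24 - x ^ 6 / 720 ≤ cos x := cos_ge_sextic hx0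
  have hx2 : x ^ 2 ≤ 2.46740166 := by nlinarith [hpi, hx0, sq_nonneg (x - 1.5707965)]
  have heq : 1 / x - x / 3 - cos x / sin x
      = ((3 - x ^ 2) * sin x - 3 * x * cos x) / (3 * x * sin x) := by
    field_simp
  constructor
  · rw [hcot, heq]
    apply div_nonneg _ (by positivity)
    nlinarith [mul_le_mul_of_nonneg_left hc1 (by linarith : (0:ℝ) ≤ 3 * x),
      mul_le_mul_of_nonneg_left hs1 (by nlinarith [hpi, hx0, sq_nonneg (x - 1.5707965)] : (0:ℝ) ≤ 3 - x ^ 2),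
      pow_nonneg hx0 5]
  · rw [hcot]
    have hnum : (30 - 10 * x ^ 2 - x ^ 4) * sin x ≤ 30 * x * cos x := by
      have e1 : 30 * x * (1 - x ^ 2 / 2 + x ^ 4 / 24 - x ^ 6 / 720) ≤ 30 * x * cos x :=
        mul_le_mul_of_nonneg_left hc2 (by linarith)
      have e2 : 30 * sin x ≤ 30 * (x - x ^ 3 / 6 + x ^ 5 / 120) := by linarith
      have e3 : 10 * x ^ 2 * (x - x ^ 3 / 6 + x ^ 5 / 120 - x ^ 7 / 5040)
          ≤ 10 * x ^ 2 * sin x := mul_le_mul_of_nonneg_left hs3 (by positivity)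
      have e4 : x ^ 4 * (x - x ^ 3 / 6) ≤ x ^ 4 * sin x :=
        mul_le_mul_of_nonneg_left hs1 (by positivity)
      have hkey : 0 ≤ x ^ 5 * (1 / 3 - x ^ 2 / 8 - x ^ 4 / 504) := by
        have : (0:ℝ) ≤ 1 / 3 - x ^ 2 / 8 - x ^ 4 / 504 := by nlinarith [sq_nonneg (x^2)]
        positivity
      nlinarith [hkey]
    have heq2 : 1 / x - x / 3 - cos x / sin x - x ^ 3 / 30
        = ((30 - 10 * x ^ 2 - x ^ 4) * sin x - 30 * x * cos x) / (30 * x * sin x) := by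
      field_simp
      ring
    have : 1 / x - x / 3 - cos x / sin x - x ^ 3 / 30 ≤ 0 := by
      rw [heq2]
      apply div_nonpos_of_nonpos_of_nonneg (by linarith) (by positivity)
    linarith
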